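/- Let q > 0 satisfy (α/2)q = (1-α)e^{-q²/2}/(√(2π)Φ([-q,q])), and let m_{2k} = (1-α)·∫_{-q}^q x^{2k} e^{-x²/2} dx / ∫_{-q}^q e^{-x²/2} dx denote the 2k-th moment of the measure (1-α)Φ_q. Then m_{2k} = (2k-1)·m_{2k-2} - α·q^{2k} for all k ≥ 1, with m_0 = 1-α. -/

import Mathlib

open Real

lemma cont_aux (n : ℕ) : Continuous (fun x : ℝ => x ^ n * Real.exp (-x ^ 2 / 2)) := by
  continuity

lemma parts_aux (q : ℝ) (n : ℕ) :
    (∫ x in (-q)..q, x ^ (2 * n + 2) * Real.exp (-x ^ 2 / 2)) =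
      (2 * n + 1) * (∫ x in (-q)..q, x ^ (2 * n) * Real.exp (-x ^ 2 / 2)) -
        2 * q ^ (2 * n + 1) * Real.exp (-q ^ 2 / 2) := by
  have hd : ∀ x : ℝ, HasDerivAt (fun y : ℝ => -(y ^ (2 * n + 1) * Real.exp (-y ^ 2 / 2)))
      (x ^ (2 * n + 2) * Real.exp (-x ^ 2 / 2)
        - (2 * n + 1) * (x ^ (2 * n) * Real.exp (-x ^ 2 / 2))) x := by
    intro x
    have h1 : HasDerivAt (fun y : ℝ => y ^ (2 * n + 1)) ((2 * n + 1) * x ^ (2 * n)) x := by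
      simpa using (hasDerivAt_pow (2 * n + 1) x)
    have h2 : HasDerivAt (fun y : ℝ => Real.exp (-y ^ 2 / 2)) (Real.exp (-x ^ 2 / 2) * (-x)) x := by
      have hin : HasDerivAt (fun y : ℝ => -y ^ 2 / 2) (-x) x := by
        have : HasDerivAt (fun y : ℝ => y ^ 2) (2 * x) x := by
          simpa using (hasDerivAt_pow 2 x)
        have := (this.neg.div_const 2)
        simpa [neg_div] using this
      exact hin.exp
    have := (h1.mul h2).neg
    refine this.congr_deriv ?_
    have hp : x ^ (2 * n + 2) = x ^ (2 * n + 1) * x := pow_succ x (2 * n + 1)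
    rw [hp]
    ring
  have hcont : Continuous (fun x : ℝ => x ^ (2 * n + 2) * Real.exp (-x ^ 2 / 2)
      - (2 * n + 1) * (x ^ (2 * n) * Real.exp (-x ^ 2 / 2))) := by
    exact (cont_aux _).sub (continuous_const.mul (cont_aux _))
  have key := intervalIntegral.integral_eq_sub_of_hasDerivAt
    (f := fun y : ℝ => -(y ^ (2 * n + 1) * Real.exp (-y ^ 2 / 2)))
    (a := -q) (b := q) (fun x _ => hd x) (hcont.intervalIntegrable _ _)
  have hsub : (∫ x in (-q)..q, (x ^ (2 * n + 2) * Real.exp (-x ^ 2 / 2)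
      - (2 * n + 1) * (x ^ (2 * n) * Real.exp (-x ^ 2 / 2)))) =
      (∫ x in (-q)..q, x ^ (2 * n + 2) * Real.exp (-x ^ 2 / 2)) -
      (∫ x in (-q)..q, (2 * n + 1) * (x ^ (2 * n) * Real.exp (-x ^ 2 / 2))) := by
    exact intervalIntegral.integral_sub ((cont_aux _).intervalIntegrable _ _)
      ((continuous_const.mul (cont_aux _)).intervalIntegrable _ _)
  rw [hsub] at key
  rw [intervalIntegral.integral_const_mul] at key
  have hodd : (-q : ℝ) ^ (2 * n + 1) = -q ^ (2 * n + 1) := by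
    rw [Odd.neg_pow ⟨n, by ring⟩]
  have hsq : (-q : ℝ) ^ 2 = q ^ 2 := by ring
  simp only [hodd, hsq, neg_neg] at key
  linarith [key]

theorem stmt5 (α q : ℝ) (hα : α ∈ Set.Ioo (0:ℝ) 1) (hq : 0 < q)
    (hqeq : α / 2 * q = (1 - α) * Real.exp (-q ^ 2 / 2) /
        (Real.sqrt (2 * π) *
          ((1 / Real.sqrt (2 * π)) * ∫ x in (-q)..q, Real.exp (-x ^ 2 / 2))))
    (m : ℕ → ℝ)
    (hm : ∀ k : ℕ, m k = (1 - α) * (∫ x in (-q)..q, x ^ (2 * k) * Real.exp (-x ^ 2 / 2)) /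
        ∫ x in (-q)..q, Real.exp (-x ^ 2 / 2)) :
    m 0 = 1 - α ∧ ∀ k : ℕ, 1 ≤ k → m k = (2 * k - 1) * m (k - 1) - α * q ^ (2 * k) := by
  set I0 : ℝ := ∫ x in (-q)..q, Real.exp (-x ^ 2 / 2) with hI0
  have hI0pos : 0 < I0 := by
    apply intervalIntegral.intervalIntegral_pos_of_pos_on
    · exact (Real.continuous_exp.comp (by continuity)).intervalIntegrable _ _
    · intro x _; positivity
    · linarith
  have hsimp : Real.sqrt (2 * π) * ((1 / Real.sqrt (2 * π)) * I0) = I0 := by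
    have : Real.sqrt (2 * π) ≠ 0 := by positivity
    field_simp
  rw [hsimp] at hqeq
  -- key: (1-α) * exp(-q²/2) = α/2 * q * I0
  have hE : (1 - α) * Real.exp (-q ^ 2 / 2) = α / 2 * q * I0 := by
    field_simp at hqeq
    rw [neg_div]
    linarith
  constructor
  · rw [hm 0]
    simp only [mul_zero, pow_zero, one_mul]
    rw [← hI0]
    field_simp
  · intro k hk
    obtain ⟨n, rfl⟩ : ∃ n, k = n + 1 := ⟨k - 1, (Nat.succ_pred_eq_of_pos hk).symm⟩
    rw [hm (n + 1), Nat.add_sub_cancel, hm n]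
    have h2 : 2 * (n + 1) = 2 * n + 2 := by ring
    rw [h2, parts_aux q n]
    have hcast : ((2 : ℝ) * (n + 1 : ℕ) - 1) = 2 * n + 1 := by push_cast; ring
    rw [hcast]
    have hkey : (1 - α) * (2 * q ^ (2 * n + 1) * Real.exp (-q ^ 2 / 2)) =
        I0 * (α * q ^ (2 * n + 2)) := by
      linear_combination (2 * q ^ (2 * n + 1)) * hE
    field_simp
    simp only [neg_div] at hkey ⊢
    linear_combination -hkey
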